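/- arXiv:2108.09255 — 2 statements merged into one kernel-verified Lean document; each statement's English description precedes it below -/
import Mathlib

section
/- Let θ > 1/2 and let t > 0 be the unique positive root of x = tanh(2θx). Then 8θ³·sech⁶(2θt) < 1. -/
/-- For θ > 1/2 and t the unique positive root of x = tanh(2θx), one has
8θ³ sech⁶(2θt) < 1. -/
theorem stmt_13 (θ t : ℝ) (hθ : 1 / 2 < θ) (ht : 0 < t)
    (hfix : Real.tanh (2 * θ * t) = t) :
    8 * θ ^ 3 * (1 / Real.cosh (2 * θ * t)) ^ 6 < 1 := by
  set u := 2 * θ * t with hu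
  have hθ0 : 0 < θ := by linarith
  have hu0 : 0 < u := by positivity
  have hc : 0 < Real.cosh u := Real.cosh_pos u
  have hsinh : Real.sinh u = t * Real.cosh u := by
    have := Real.tanh_eq_sinh_div_cosh u
    rw [hfix] at this
    field_simp at this
    linarith [this]
  have hs : u < Real.sinh u := Real.self_lt_sinh_iff.mpr hu0
  have h2θ : 2 * θ < Real.cosh u := by
    rw [hsinh] at hs
    nlinarith
  have hc1 : 1 ≤ Real.cosh u := Real.one_le_cosh u
  have hlt : 2 * θ * (1 / Real.cosh u) ^ 2 < 1 := by
    rw [div_pow, one_pow, mul_one_div, div_lt_one (by positivity)]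
    nlinarith
  have hpos : 0 < 2 * θ * (1 / Real.cosh u) ^ 2 := by positivity
  calc 8 * θ ^ 3 * (1 / Real.cosh u) ^ 6
      = (2 * θ * (1 / Real.cosh u) ^ 2) ^ 3 := by ring
    _ < 1 := pow_lt_one₀ hpos.le hlt (by norm_num)
end

section
/- Gaussian conjugation identity: for each i, if conditionally on a {−1,1}-valued symmetric array Y (with zero diagonal) the random variables φ₁,…,φₙ are independent with φᵢ ~ N(kᵢ/(n−1), 1/(θ(n−1))) where kᵢ = ∑ⱼ Y_{ij}, and Y has probability mass proportional to exp(θ/(2(n−1)) ∑ᵢ kᵢ² + (1/2)∑ᵢ βᵢkᵢ), then conditionally on φ the edges (Y_{ij})_{i<j} are mutually independent with P(Y_{ij} = 1 | φ) = exp(θ(φᵢ+φⱼ) + (βᵢ+βⱼ)/2) / (exp(θ(φᵢ+φⱼ) + (βᵢ+βⱼ)/2) + exp(−θ(φᵢ+φⱼ) − (βᵢ+βⱼ)/2)). -/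
open Finset

/-- The edge set: pairs i < j of vertices in [n]. -/
abbrev Edge (n : ℕ) := {p : Fin n × Fin n // p.1 < p.2}

/-- Sign encoding of a Boolean edge value: true ↦ +1, false ↦ −1. -/
def sgn (b : Bool) : ℝ := if b then 1 else -1

/-- The joint weight of (Y, φ), proportional to the joint density of the auxiliary-variable
representation: exp(−(n−1)θ/2 ∑φᵢ² + ∑_{i<j} Y_{ij}(θ(φᵢ+φⱼ) + (βᵢ+βⱼ)/2)). -/
noncomputable def jointWeight (n : ℕ) (θ : ℝ) (β φ : Fin n → ℝ)
    (Y : Edge n → Bool) : ℝ :=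
  Real.exp (-((n : ℝ) - 1) * θ / 2 * ∑ i, φ i ^ 2 +
    ∑ e : Edge n, sgn (Y e) * (θ * (φ e.1.1 + φ e.1.2) + (β e.1.1 + β e.1.2) / 2))

/-- Given φ, the edges are conditionally independent with the stated Bernoulli law:
the conditional pmf of Y given φ factorizes as a product over edges, with
P(Y_{ij} = 1 | φ) = e^{θ(φᵢ+φⱼ)+(βᵢ+βⱼ)/2} / (e^{θ(φᵢ+φⱼ)+(βᵢ+βⱼ)/2} + e^{−θ(φᵢ+φⱼ)−(βᵢ+βⱼ)/2}). -/
theorem stmt_17 (n : ℕ) (θ : ℝ) (hθ : 0 < θ) (β φ : Fin n → ℝ) (Y : Edge n → Bool) :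
    jointWeight n θ β φ Y / (∑ Y' : Edge n → Bool, jointWeight n θ β φ Y') =
      ∏ e : Edge n,
        (if Y e then
          Real.exp (θ * (φ e.1.1 + φ e.1.2) + (β e.1.1 + β e.1.2) / 2) /
            (Real.exp (θ * (φ e.1.1 + φ e.1.2) + (β e.1.1 + β e.1.2) / 2) +
              Real.exp (-(θ * (φ e.1.1 + φ e.1.2)) - (β e.1.1 + β e.1.2) / 2))
        else
          1 - Real.exp (θ * (φ e.1.1 + φ e.1.2) + (β e.1.1 + β e.1.2) / 2) /
            (Real.exp (θ * (φ e.1.1 + φ e.1.2) + (β e.1.1 + β e.1.2) / 2) +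
              Real.exp (-(θ * (φ e.1.1 + φ e.1.2)) - (β e.1.1 + β e.1.2) / 2))) := by
  set a : Edge n → ℝ := fun e => θ * (φ e.1.1 + φ e.1.2) + (β e.1.1 + β e.1.2) / 2 with ha
  set C : ℝ := Real.exp (-((n : ℝ) - 1) * θ / 2 * ∑ i, φ i ^ 2) with hC
  have hjw : ∀ Y' : Edge n → Bool,
      jointWeight n θ β φ Y' = C * ∏ e : Edge n, Real.exp (sgn (Y' e) * a e) := by
    intro Y'
    rw [jointWeight, Real.exp_add, Real.exp_sum]
  have hsum : (∑ Y' : Edge n → Bool, jointWeight n θ β φ Y') =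
      C * ∏ e : Edge n, (Real.exp (a e) + Real.exp (-(a e))) := by
    simp only [hjw]
    rw [← Finset.mul_sum]
    congr 1
    have := Finset.prod_univ_sum (fun _ : Edge n => (Finset.univ : Finset Bool))
      (fun e b => Real.exp (sgn b * a e))
    rw [Fintype.piFinset_univ] at this
    rw [← this]
    refine Finset.prod_congr rfl fun e _ => ?_
    rw [Fintype.sum_bool]
    simp [sgn]
  rw [hjw Y, hsum, mul_div_mul_left _ _ (Real.exp_ne_zero _), ← Finset.prod_div_distrib]
  refine Finset.prod_congr rfl fun e _ => ?_
  have hpos : 0 < Real.exp (a e) + Real.exp (-(a e)) :=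
    add_pos (Real.exp_pos _) (Real.exp_pos _)
  have harg : -(θ * (φ e.1.1 + φ e.1.2)) - (β e.1.1 + β e.1.2) / 2 = -(a e) := by
    rw [ha]; ring
  rw [harg]
  show Real.exp (sgn (Y e) * a e) / (Real.exp (a e) + Real.exp (-(a e))) =
    if Y e then Real.exp (a e) / (Real.exp (a e) + Real.exp (-(a e)))
    else 1 - Real.exp (a e) / (Real.exp (a e) + Real.exp (-(a e)))
  cases hY : Y e with
  | true => simp [sgn]
  | false =>
    simp only [sgn, if_neg Bool.false_ne_true, neg_one_mul, if_false]
    field_simp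
    ring
end
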